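/- Let d be a positive integer and a : ℤ → ℚ a function such that a(n) = a(n') whenever d divides n − n' or d divides n + n'. Then there exists a rational function F ∈ ℚ(q) such that the formal power series Σ_{n≥1} (−1)^{n−1} n a(n) q^n is the Laurent expansion of F at q = 0, and F is fixed by the field automorphism of ℚ(q) sending q to q⁻¹, i.e. F(1/q) = F(q). -/

import Mathlib

noncomputable section

/-- Let `d > 0` and let `a : ℤ → ℚ` satisfy `a n = a n'` whenever `d ∣ n - n'` or
`d ∣ n + n'`.  Then there is a rational function `F ∈ ℚ(q)` whose Laurent expansion
at `q = 0` (i.e. its image in `ℚ((q))` under the canonical embedding) is the power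
series `∑_{n ≥ 1} (-1)^{n-1} n a(n) q^n`, and `F` is fixed by the field automorphism
of `ℚ(q)` sending `q` to `q⁻¹` (formulated: any ring homomorphism of `ℚ(q)` sending
`q` to `q⁻¹` fixes `F`; such a homomorphism is necessarily that automorphism). -/
theorem stmt4 (d : ℕ) (hd : 0 < d) (a : ℤ → ℚ)
    (ha : ∀ n n' : ℤ, ((d : ℤ) ∣ n - n' ∨ (d : ℤ) ∣ n + n') → a n = a n') :
    ∃ F : RatFunc ℚ,
      (F : LaurentSeries ℚ) =
        ((PowerSeries.mk fun n => if n = 0 then 0 else (-1) ^ (n - 1) * n * a n :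
            PowerSeries ℚ) : LaurentSeries ℚ) ∧
      ∀ φ : RatFunc ℚ →+* RatFunc ℚ, φ RatFunc.X = (RatFunc.X)⁻¹ → φ F = F := by
  classical
  set D := 2 * d with hDdef
  have hD : 0 < D := by omega
  set b : ℕ → ℚ := fun n => (-1) ^ (n - 1) * a n with hbdef
  set S : PowerSeries ℚ :=
    PowerSeries.mk fun n => if n = 0 then 0 else (-1) ^ (n - 1) * n * a n with hSdef
  have hc : ∀ n : ℕ, PowerSeries.coeff n S = n * b n := by
    intro n
    rw [hSdef, PowerSeries.coeff_mk]
    rcases eq_or_ne n 0 with rfl | h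
    · simp
    · rw [if_neg h, hbdef]; ring
  -- periodicity of b
  have hper : ∀ n : ℕ, 1 ≤ n → b (n + D) = b n := by
    intro n hn
    have h1 : ((-1 : ℚ)) ^ (n + D - 1) = (-1) ^ (n - 1) := by
      rw [show n + D - 1 = (n - 1) + 2 * d by omega, pow_add, pow_mul]
      norm_num
    have h2 : a (↑(n + D)) = a ↑n := by
      apply ha
      left
      refine ⟨2, ?_⟩
      push_cast [hDdef]
      ring
    rw [hbdef]
    simp only []
    rw [h1, h2]
  -- reflection symmetry of b
  have hrefl : ∀ s : ℕ, 1 ≤ s → s < D → b (D - s) = b s := by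
    intro s h1 h2
    have hp : ((-1 : ℚ)) ^ (D - s - 1) = (-1) ^ (s - 1) := by
      rw [neg_one_pow_eq_pow_mod_two, neg_one_pow_eq_pow_mod_two (n := s - 1)]
      congr 1
      omega
    have hq : a (↑(D - s)) = a ↑s := by
      apply ha
      right
      refine ⟨2, ?_⟩
      push_cast [Nat.cast_sub h2.le, hDdef]
      omega
    rw [hbdef]
    simp only []
    rw [hp, hq]
  set g : ℕ → ℚ := fun m =>
    PowerSeries.coeff m ((1 - PowerSeries.X ^ D) ^ 2 * S) with hgdef
  have hgf : ∀ m : ℕ, g m = m * b m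
      - 2 * (if D ≤ m then ((m - D : ℕ) : ℚ) * b (m - D) else 0)
      + (if 2 * D ≤ m then ((m - 2 * D : ℕ) : ℚ) * b (m - 2 * D) else 0) := by
    intro m
    have hexp : (1 - PowerSeries.X ^ D) ^ 2 * S
        = S - (S * PowerSeries.X ^ D + S * PowerSeries.X ^ D)
          + S * PowerSeries.X ^ (2 * D) := by
      ring
    rw [hgdef]
    simp only [hexp, map_add, map_sub, PowerSeries.coeff_mul_X_pow', hc]
    split_ifs <;> ring
  have hA : ∀ m : ℕ, 2 * D ≤ m → g m = 0 := by
    intro m hm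
    rw [hgf m, if_pos (by omega : D ≤ m), if_pos hm]
    have h1 : b m = b (m - D) := by
      have := hper (m - D) (by omega)
      rw [show m - D + D = m by omega] at this
      exact this
    have h2 : ((m - 2*D : ℕ):ℚ) * b (m - 2*D) = ((m - 2*D : ℕ):ℚ) * b (m - D) := by
      rcases eq_or_ne m (2*D) with rfl | h
      · simp
      · have := hper (m - 2*D) (by omega)
        rw [show m - 2*D + D = m - D by omega] at this
        rw [this]
    rw [h1, h2, Nat.cast_sub (by omega : D ≤ m), Nat.cast_sub (by omega : 2*D ≤ m)]
    push_cast
    ring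
  have hBhalf : ∀ m : ℕ, 1 ≤ m → m < D → g (2 * D - m) = g m := by
    intro m h1 h2
    rw [hgf m, if_neg (by omega), if_neg (by omega)]
    rw [hgf (2*D - m), if_pos (by omega : D ≤ 2*D - m), if_neg (by omega)]
    have e1 : b (2*D - m) = b (D - m) := by
      have := hper (D - m) (by omega)
      rw [show D - m + D = 2*D - m by omega] at this
      exact this
    have e2 : b (D - m) = b m := hrefl m h1 h2
    rw [show 2*D - m - D = D - m by omega, e1, e2,
      Nat.cast_sub (by omega : m ≤ 2*D), Nat.cast_sub (by omega : m ≤ D)]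
    push_cast
    ring
  have hB : ∀ m : ℕ, m ≤ 2 * D → g (2 * D - m) = g m := by
    intro m hm
    rcases eq_or_ne m 0 with rfl | hm0
    · rw [Nat.sub_zero, hA (2*D) le_rfl, hgf 0, if_neg (by omega), if_neg (by omega)]
      simp
    rcases eq_or_ne m (2*D) with rfl | hm2
    · rw [Nat.sub_self, hA (2*D) le_rfl, hgf 0, if_neg (by omega), if_neg (by omega)]
      simp
    rcases lt_trichotomy m D with h | h | h
    · exact hBhalf m (by omega) h
    · rw [show 2*D - m = m by omega]
    · have := hBhalf (2*D - m) (by omega) (by omega)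
      rw [show 2*D - (2*D - m) = m by omega] at this
      exact this.symm
  -- the numerator power series
  set T : PowerSeries ℚ :=
    ∑ m ∈ Finset.range (2 * D), PowerSeries.C (g m) * PowerSeries.X ^ m with hTdef
  have hE1 : (1 - PowerSeries.X ^ D) ^ 2 * S = T := by
    ext k
    have hL : PowerSeries.coeff k ((1 - PowerSeries.X ^ D) ^ 2 * S) = g k := by
      rw [hgdef]
    have hR : PowerSeries.coeff k T = if k < 2 * D then g k else 0 := by
      rw [hTdef, map_sum]
      simp only [PowerSeries.coeff_C_mul, PowerSeries.coeff_X_pow, mul_ite, mul_one, mul_zero]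
      rw [Finset.sum_ite_eq (Finset.range (2*D)) k g]
      simp [Finset.mem_range]
    rw [hL, hR]
    split_ifs with h
    · rfl
    · exact hA k (by omega)
  -- the rational function
  set N : RatFunc ℚ := ∑ m ∈ Finset.range (2 * D), ((g m : ℚ) : RatFunc ℚ) * RatFunc.X ^ m
    with hNdef
  set Q : RatFunc ℚ := (1 - RatFunc.X ^ D) ^ 2 with hQdef
  refine ⟨N / Q, ?_, ?_⟩
  · -- Laurent expansion
    have hcast : ∀ q : ℚ, ((PowerSeries.C q : PowerSeries ℚ) : LaurentSeries ℚ)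
        = ((q : RatFunc ℚ) : LaurentSeries ℚ) := by
      intro q
      have h1 := eq_ratCast ((HahnSeries.ofPowerSeries ℤ ℚ).comp (PowerSeries.C)) q
      have h2 : ((q : RatFunc ℚ) : LaurentSeries ℚ) = (q : LaurentSeries ℚ) := map_ratCast _ q
      simp only [RingHom.coe_comp, Function.comp_apply] at h1
      rw [show ((PowerSeries.C q : PowerSeries ℚ) : LaurentSeries ℚ)
        = HahnSeries.ofPowerSeries ℤ ℚ (PowerSeries.C q) from rfl, h1]
      exact h2.symm
    have hTK : ((T : PowerSeries ℚ) : LaurentSeries ℚ) = ((N : RatFunc ℚ) : LaurentSeries ℚ) := by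
      rw [hTdef, hNdef, map_sum, map_sum]
      refine Finset.sum_congr rfl fun m _ => ?_
      rw [show (HahnSeries.ofPowerSeries ℤ ℚ) (PowerSeries.C (g m) * PowerSeries.X ^ m)
        = ((PowerSeries.C (g m) * PowerSeries.X ^ m : PowerSeries ℚ) : LaurentSeries ℚ)
        from rfl, PowerSeries.coe_mul, PowerSeries.coe_pow, hcast, PowerSeries.coe_X]
      rw [map_mul, map_pow, RatFunc.coe_X]
    have hQK : ((Q : RatFunc ℚ) : LaurentSeries ℚ)
        = (((1 - PowerSeries.X ^ D) ^ 2 : PowerSeries ℚ) : LaurentSeries ℚ) := by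
      rw [hQdef]
      rw [map_pow, map_sub, map_one, map_pow, RatFunc.coe_X]
      rw [PowerSeries.coe_pow, PowerSeries.coe_sub, PowerSeries.coe_one, PowerSeries.coe_pow,
        PowerSeries.coe_X]
    have hQne : (((1 - PowerSeries.X ^ D) ^ 2 : PowerSeries ℚ) : LaurentSeries ℚ) ≠ 0 := by
      intro h
      have h' : (HahnSeries.ofPowerSeries ℤ ℚ) ((1 - PowerSeries.X ^ D) ^ 2)
          = (HahnSeries.ofPowerSeries ℤ ℚ) 0 := by
        rw [map_zero]; exact h
      have hinj := HahnSeries.ofPowerSeries_injective (Γ := ℤ) (R := ℚ) h'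
      have h0 : PowerSeries.constantCoeff (R := ℚ) ((1 - PowerSeries.X ^ D) ^ 2) = 1 := by
        simp [map_pow, map_sub, zero_pow hD.ne']
      rw [hinj] at h0
      simp at h0
    rw [map_div₀, hQK, ← hTK, ← hE1]
    rw [div_eq_iff hQne]
    rw [← PowerSeries.coe_mul]
    ring_nf
  · -- invariance
    intro φ hφ
    have hX : (RatFunc.X : RatFunc ℚ) ≠ 0 := RatFunc.X_ne_zero
    have hXD : (RatFunc.X : RatFunc ℚ) ^ D ≠ 0 := pow_ne_zero _ hX
    have hX2D : (RatFunc.X : RatFunc ℚ) ^ (2 * D) ≠ 0 := pow_ne_zero _ hX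
    have hφN : φ N = ∑ m ∈ Finset.range (2 * D),
        ((g m : ℚ) : RatFunc ℚ) * (RatFunc.X⁻¹) ^ m := by
      rw [hNdef, map_sum]
      refine Finset.sum_congr rfl fun m _ => ?_
      rw [map_mul, map_pow, map_ratCast, hφ]
    have hφQ : φ Q = (1 - (RatFunc.X⁻¹) ^ D) ^ 2 := by
      rw [hQdef, map_pow, map_sub, map_one, map_pow, hφ]
    have hQclaim : RatFunc.X ^ (2 * D) * (1 - (RatFunc.X⁻¹) ^ D) ^ 2 = Q := by
      rw [hQdef, inv_pow, show 2 * D = D * 2 by ring, pow_mul, ← mul_pow,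
        mul_sub, mul_one, mul_inv_cancel₀ hXD]
      ring
    have hNclaim : RatFunc.X ^ (2 * D) * (∑ m ∈ Finset.range (2 * D),
        ((g m : ℚ) : RatFunc ℚ) * (RatFunc.X⁻¹) ^ m) = N := by
      rw [Finset.mul_sum]
      have step : ∀ m ∈ Finset.range (2 * D),
          RatFunc.X ^ (2 * D) * (((g m : ℚ) : RatFunc ℚ) * (RatFunc.X⁻¹) ^ m)
          = ((g m : ℚ) : RatFunc ℚ) * RatFunc.X ^ (2 * D - m) := by
        intro m hm
        rw [Finset.mem_range] at hm
        rw [inv_pow, pow_sub₀ _ hX (by omega : m ≤ 2 * D)]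
        ring
      rw [Finset.sum_congr rfl step]
      have ext1 : ∑ m ∈ Finset.range (2 * D),
          ((g m : ℚ) : RatFunc ℚ) * RatFunc.X ^ (2 * D - m)
          = ∑ m ∈ Finset.range (2 * D + 1),
          ((g m : ℚ) : RatFunc ℚ) * RatFunc.X ^ (2 * D - m) := by
        rw [Finset.sum_range_succ, hA (2 * D) le_rfl]
        push_cast
        ring
      rw [ext1]
      have refl1 := Finset.sum_range_reflect
        (fun m => ((g m : ℚ) : RatFunc ℚ) * RatFunc.X ^ (2 * D - m)) (2 * D + 1)
      rw [← refl1]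
      have ext2 : ∑ m ∈ Finset.range (2 * D + 1),
          ((g (2 * D + 1 - 1 - m) : ℚ) : RatFunc ℚ) * RatFunc.X ^ (2 * D - (2 * D + 1 - 1 - m))
          = ∑ m ∈ Finset.range (2 * D + 1), ((g m : ℚ) : RatFunc ℚ) * RatFunc.X ^ m := by
        refine Finset.sum_congr rfl fun m hm => ?_
        rw [Finset.mem_range] at hm
        rw [show 2 * D + 1 - 1 - m = 2 * D - m by omega, hB m (by omega),
          show 2 * D - (2 * D - m) = m by omega]
      rw [ext2, hNdef, Finset.sum_range_succ, hA (2 * D) le_rfl]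
      push_cast
      ring
    rw [map_div₀, hφN, hφQ, ← hQclaim, ← hNclaim,
      mul_div_mul_left _ _ hX2D]
end
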